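/- Fix d ≥ 1, q ≥ 1, real coefficients α_0, …, α_{q−1} and β_0, …, β_q, and constants L, M, C₀ > 0 and an integer p ≥ 1. Assume the generating polynomial p(s) = s^q − Σ_{i=1}^{q} α_{q−i} s^{q−i} satisfies the root condition: every complex root of p has modulus at most 1 and every root of modulus exactly 1 is simple. Let f : ℝ^d × ℝ → ℝ^d and g : ℝ^d × ℝ × ℝ → ℝ^d be uniformly L-Lipschitz in their first argument with respect to ‖·‖_∞, let the quadrature weights satisfy |w_{n,i}| ≤ Mh, and let x : [0,∞) → ℝ^d be a function whose local truncation errors τ_n := x(t_n) − Σ_{i=1}^{q} α_{q−i} x(t_{n−i}) − h Σ_{i=0}^{q} β_{q−i} f(x(t_{n−i}), t_{n−i}) − h Σ_{i=0}^{n} w_{n,i} g(x(t_i), t_i, t_n) satisfy ‖τ_n‖_∞ ≤ C₀ h^{p+1} for all n ≥ q. Then for every T > 0 there exist h₀ > 0 and C = C(T) > 0 such that for all 0 < h ≤ h₀, the numerical solution (x_n) defined by the scheme x_n = Σ_{i=1}^{q} α_{q−i} x_{n−i} + h Σ_{i=0}^{q} β_{q−i} f(x_{n−i}, t_{n−i})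 + h Σ_{i=0}^{n} w_{n,i} g(x_i, t_i, t_n) for n ≥ q with exact starting values x_i = x(t_i) for 0 ≤ i ≤ q−1, satisfies ‖x(t_n) − x_n‖_∞ ≤ C h^{p} for every n with nh ≤ T. -/

import Mathlib

open Finset Polynomial

namespace Stmt5Aux

noncomputable section

def geom (l : ℂ) : PowerSeries ℂ := PowerSeries.mk fun n => l ^ n

@[simp] lemma coeff_geom (l : ℂ) (n : ℕ) : PowerSeries.coeff n (geom l) = l ^ n :=
  PowerSeries.coeff_mk n _

lemma one_sub_mul_geom (l : ℂ) :
    (1 - PowerSeries.C l * PowerSeries.X) * geom l = 1 := by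
  ext n
  rw [sub_mul, one_mul, mul_assoc, map_sub]
  cases n with
  | zero => simp
  | succ m =>
    rw [PowerSeries.coeff_C_mul, PowerSeries.coeff_succ_X_mul]
    simp [pow_succ, mul_comm, PowerSeries.coeff_one]

lemma geom_mul_geom (l m : ℂ) (h : l ≠ m) :
    geom l * geom m = (l - m)⁻¹ • (l • geom l - m • geom m) := by
  have hne : l - m ≠ 0 := sub_ne_zero.2 h
  rw [eq_inv_smul_iff₀ hne]
  ext n
  rw [PowerSeries.coeff_smul, PowerSeries.coeff_mul,
    Finset.Nat.sum_antidiagonal_eq_sum_range_succ_mk]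
  have := geom_sum₂_mul l m (n + 1)
  simp only [Nat.add_sub_cancel] at this
  simp only [coeff_geom, map_sub, PowerSeries.coeff_smul, coeff_geom, smul_eq_mul]
  rw [mul_comm, this]
  ring

lemma geom_mul_geom_mem {l m : ℂ} (h : l ≠ m) :
    geom l * geom m ∈ Submodule.span ℂ ({geom l, geom m} : Set (PowerSeries ℂ)) := by
  rw [geom_mul_geom l m h]
  refine Submodule.smul_mem _ _ (sub_mem ?_ ?_) <;>
    exact Submodule.smul_mem _ _ (Submodule.subset_span (by simp))

lemma prod_geom_mem_span (U : Multiset ℂ) :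
    U.Nodup → (U.map geom).prod ∈
      Submodule.span ℂ (insert (1 : PowerSeries ℂ) (geom '' {z | z ∈ U})) := by
  induction U using Multiset.induction_on with
  | empty =>
    intro _
    rw [Multiset.map_zero, Multiset.prod_zero]
    exact Submodule.subset_span (Set.mem_insert _ _)
  | cons l U ih =>
    intro hU
    obtain ⟨hl, hU'⟩ := Multiset.nodup_cons.mp hU
    have hmem := ih hU'
    rw [Multiset.map_cons, Multiset.prod_cons]
    have h2 : geom l * (U.map geom).prod ∈
        Submodule.map (LinearMap.mulLeft ℂ (geom l))
          (Submodule.span ℂ (insert (1 : PowerSeries ℂ) (geom '' {z | z ∈ U}))) :=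
      Submodule.mem_map_of_mem hmem
    rw [Submodule.map_span] at h2
    refine Submodule.span_le.mpr ?_ h2
    rintro y ⟨z, hz, rfl⟩
    simp only [LinearMap.mulLeft_apply]
    rcases hz with rfl | ⟨m, hm, rfl⟩
    · rw [mul_one]
      exact Submodule.subset_span (Set.mem_insert_iff.mpr
        (Or.inr ⟨l, by simp, rfl⟩))
    · have hlm : l ≠ m := fun hh => hl (hh ▸ hm)
      refine Submodule.span_mono ?_ (geom_mul_geom_mem hlm)
      rintro t (rfl | rfl)
      · exact Set.mem_insert_iff.mpr (Or.inr ⟨l, by simp, rfl⟩)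
      · exact Set.mem_insert_iff.mpr (Or.inr ⟨m, by simp only [Set.mem_setOf_eq, Multiset.mem_cons]; exact Or.inr hm, rfl⟩)

lemma bounded_of_mem_span {s : Set (PowerSeries ℂ)}
    (hs : ∀ g ∈ s, ∀ n, ‖PowerSeries.coeff n g‖ ≤ 1)
    {F : PowerSeries ℂ} (hF : F ∈ Submodule.span ℂ s) :
    ∃ K, 0 ≤ K ∧ ∀ n, ‖PowerSeries.coeff n F‖ ≤ K := by
  induction hF using Submodule.span_induction with
  | mem g hg => exact ⟨1, zero_le_one, hs g hg⟩
  | zero => exact ⟨0, le_refl _, by simp⟩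
  | add a b _ _ iha ihb =>
    obtain ⟨K1, hK1, h1⟩ := iha
    obtain ⟨K2, hK2, h2⟩ := ihb
    refine ⟨K1 + K2, by linarith, fun n => ?_⟩
    rw [map_add]
    exact (norm_add_le _ _).trans (add_le_add (h1 n) (h2 n))
  | smul c a _ ih =>
    obtain ⟨K, hK, h1⟩ := ih
    refine ⟨‖c‖ * K, by positivity, fun n => ?_⟩
    rw [PowerSeries.coeff_smul, smul_eq_mul, norm_mul]
    exact mul_le_mul_of_nonneg_left (h1 n) (norm_nonneg c)

lemma range_geom_sum_le {r : ℝ} (h0 : 0 ≤ r) (h1 : r < 1) (n : ℕ) :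
    ∑ i ∈ range n, r ^ i ≤ (1 - r)⁻¹ := by
  have hpos : 0 < 1 - r := by linarith
  rw [inv_eq_one_div, le_div_iff₀ hpos]
  have := geom_sum_mul r n
  have hrn : (0:ℝ) ≤ r ^ n := pow_nonneg h0 n
  nlinarith [this]

lemma geom_small_mul_bounded {l : ℂ} (hl : ‖l‖ < 1) {F : PowerSeries ℂ} {K : ℝ}
    (hF : ∀ n, ‖PowerSeries.coeff n F‖ ≤ K) (n : ℕ) :
    ‖PowerSeries.coeff n (geom l * F)‖ ≤ (1 - ‖l‖)⁻¹ * K := by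
  have hK : 0 ≤ K := le_trans (norm_nonneg _) (hF 0)
  rw [PowerSeries.coeff_mul, Finset.Nat.sum_antidiagonal_eq_sum_range_succ_mk]
  calc ‖∑ i ∈ range (n + 1),
          PowerSeries.coeff i (geom l) * PowerSeries.coeff (n - i) F‖
      ≤ ∑ i ∈ range (n + 1), ‖PowerSeries.coeff i (geom l) * PowerSeries.coeff (n - i) F‖ :=
        norm_sum_le _ _
    _ ≤ ∑ i ∈ range (n + 1), ‖l‖ ^ i * K := by
        refine Finset.sum_le_sum fun i _ => ?_
        rw [norm_mul, coeff_geom, norm_pow]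
        exact mul_le_mul_of_nonneg_left (hF _) (by positivity)
    _ = (∑ i ∈ range (n + 1), ‖l‖ ^ i) * K := by rw [Finset.sum_mul]
    _ ≤ (1 - ‖l‖)⁻¹ * K :=
        mul_le_mul_of_nonneg_right
          (range_geom_sum_le (norm_nonneg l) hl _) hK

lemma small_prod_mul_bounded (S : Multiset ℂ) :
    (∀ l ∈ S, ‖l‖ < 1) → ∀ F : PowerSeries ℂ, ∀ K : ℝ,
    (∀ n, ‖PowerSeries.coeff n F‖ ≤ K) →
    ∃ K', ∀ n, ‖PowerSeries.coeff n ((S.map geom).prod * F)‖ ≤ K' := by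
  induction S using Multiset.induction_on with
  | empty => intro _ F K hF; exact ⟨K, by simpa using hF⟩
  | cons l S ih =>
    intro hS F K hF
    obtain ⟨K', hK'⟩ := ih (fun m hm => hS m (Multiset.mem_cons_of_mem hm)) F K hF
    refine ⟨(1 - ‖l‖)⁻¹ * K', fun n => ?_⟩
    rw [Multiset.map_cons, Multiset.prod_cons, mul_assoc]
    exact geom_small_mul_bounded (hS l (Multiset.mem_cons_self l S)) hK' n

def sigmaPoly (q : ℕ) (α : ℕ → ℝ) : Polynomial ℝ :=
  1 - ∑ i ∈ Finset.Icc 1 q, Polynomial.C (α (q - i)) * Polynomial.X ^ i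

def gam (q : ℕ) (α : ℕ → ℝ) (n : ℕ) : ℝ :=
  PowerSeries.coeff n ((sigmaPoly q α : PowerSeries ℝ))⁻¹

lemma coeff_sigmaPoly (q : ℕ) (α : ℕ → ℝ) (m : ℕ) :
    (sigmaPoly q α).coeff m
      = (if m = 0 then 1 else 0) - (if m ∈ Finset.Icc 1 q then α (q - m) else 0) := by
  rw [sigmaPoly, Polynomial.coeff_sub, Polynomial.coeff_one, Polynomial.finset_sum_coeff]
  congr 1
  simp only [Polynomial.coeff_C_mul, Polynomial.coeff_X_pow, mul_ite, mul_one, mul_zero]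
  exact Finset.sum_ite_eq (Finset.Icc 1 q) m (fun i => α (q - i))

lemma constantCoeff_sigmaPoly (q : ℕ) (α : ℕ → ℝ) :
    PowerSeries.constantCoeff (sigmaPoly q α : PowerSeries ℝ) = 1 := by
  rw [← PowerSeries.coeff_zero_eq_constantCoeff_apply, Polynomial.coeff_coe,
    coeff_sigmaPoly]
  simp

lemma sigma_mul_inv (q : ℕ) (α : ℕ → ℝ) :
    (sigmaPoly q α : PowerSeries ℝ) * ((sigmaPoly q α : PowerSeries ℝ))⁻¹ = 1 :=
  PowerSeries.mul_inv_cancel _ (by rw [constantCoeff_sigmaPoly]; exact one_ne_zero)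

lemma gam_rec (q : ℕ) (α : ℕ → ℝ) (m : ℕ) :
    gam q α m = (if m = 0 then 1 else 0)
      + ∑ i ∈ Finset.Icc 1 q, (if i ≤ m then α (q - i) * gam q α (m - i) else 0) := by
  have h := congrArg (PowerSeries.coeff m) (sigma_mul_inv q α)
  rw [PowerSeries.coeff_mul, Finset.Nat.sum_antidiagonal_eq_sum_range_succ_mk,
    PowerSeries.coeff_one] at h
  have hexp : ∀ k ∈ Finset.range (m + 1),
      PowerSeries.coeff k (sigmaPoly q α : PowerSeries ℝ)
        * PowerSeries.coeff (m - k) ((sigmaPoly q α : PowerSeries ℝ))⁻¹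
      = (if k = 0 then gam q α m else 0)
        - (if k ∈ Finset.Icc 1 q then α (q - k) * gam q α (m - k) else 0) := by
    intro k hk
    rw [Polynomial.coeff_coe, coeff_sigmaPoly, sub_mul, ite_mul, ite_mul, one_mul, zero_mul]
    by_cases hk0 : k = 0 <;> by_cases hmem : k ∈ Finset.Icc 1 q <;>
      simp [hk0, hmem, gam]
  rw [Finset.sum_congr rfl hexp, Finset.sum_sub_distrib] at h
  have h1 : ∑ k ∈ Finset.range (m + 1), (if k = 0 then gam q α m else 0) = gam q α m := by
    rw [Finset.sum_ite_eq' (Finset.range (m + 1)) 0 (fun _ => gam q α m)]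
    simp
  have h2 : ∑ k ∈ Finset.range (m + 1),
        (if k ∈ Finset.Icc 1 q then α (q - k) * gam q α (m - k) else 0)
      = ∑ i ∈ Finset.Icc 1 q, (if i ≤ m then α (q - i) * gam q α (m - i) else 0) := by
    rw [Finset.sum_ite_mem, Finset.inter_comm, ← Finset.sum_ite_mem]
    refine Finset.sum_congr rfl fun i _ => ?_
    simp [Nat.lt_succ_iff]
  rw [h1, h2] at h
  linarith [h]

def rho (q : ℕ) (α : ℕ → ℝ) : Polynomial ℂ :=
  Polynomial.X ^ q - ∑ j ∈ Finset.range q, Polynomial.C ((α j : ℂ)) * Polynomial.X ^ j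

lemma degree_sum_lt (q : ℕ) (α : ℕ → ℝ) (hq : 1 ≤ q) :
    (∑ j ∈ Finset.range q, Polynomial.C ((α j : ℂ)) * Polynomial.X ^ j).degree
      < (q : WithBot ℕ) := by
  refine lt_of_le_of_lt (Polynomial.degree_sum_le _ _) ?_
  rw [Finset.sup_lt_iff (by exact_mod_cast WithBot.bot_lt_coe q)]
  intro j hj
  refine lt_of_le_of_lt (Polynomial.degree_C_mul_X_pow_le _ _) ?_
  exact_mod_cast Finset.mem_range.mp hj

lemma degree_rho (q : ℕ) (α : ℕ → ℝ) (hq : 1 ≤ q) : (rho q α).degree = q := by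
  rw [rho, Polynomial.degree_sub_eq_left_of_degree_lt]
  · exact Polynomial.degree_X_pow q
  · rw [Polynomial.degree_X_pow]; exact degree_sum_lt q α hq

lemma natDegree_rho (q : ℕ) (α : ℕ → ℝ) (hq : 1 ≤ q) : (rho q α).natDegree = q :=
  Polynomial.natDegree_eq_of_degree_eq_some (degree_rho q α hq)

lemma monic_rho (q : ℕ) (α : ℕ → ℝ) (hq : 1 ≤ q) : (rho q α).Monic := by
  rw [Polynomial.Monic, Polynomial.leadingCoeff, natDegree_rho q α hq, rho,
    Polynomial.coeff_sub, Polynomial.coeff_X_pow,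
    Polynomial.coeff_eq_zero_of_degree_lt (degree_sum_lt q α hq)]
  simp

lemma card_roots_rho (q : ℕ) (α : ℕ → ℝ) (hq : 1 ≤ q) : ((rho q α).roots).card = q := by
  have hs : (rho q α).Splits := IsAlgClosed.splits _
  have h := hs.natDegree_eq_card_roots
  rw [← h, natDegree_rho q α hq]

lemma rho_eq_prod (q : ℕ) (α : ℕ → ℝ) (hq : 1 ≤ q) :
    rho q α = ((rho q α).roots.map fun a => Polynomial.X - Polynomial.C a).prod :=
  (IsAlgClosed.splits _).eq_prod_roots_of_monic (monic_rho q α hq)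

def sigmaC (q : ℕ) (α : ℕ → ℝ) : Polynomial ℂ :=
  1 - ∑ i ∈ Finset.Icc 1 q, Polynomial.C ((α (q - i) : ℂ)) * Polynomial.X ^ i

lemma sigmaC_eq_map (q : ℕ) (α : ℕ → ℝ) :
    (sigmaPoly q α).map (algebraMap ℝ ℂ) = sigmaC q α := by
  simp [sigmaPoly, sigmaC, Polynomial.map_sub, Polynomial.map_sum, Polynomial.map_mul,
    Polynomial.map_pow, Polynomial.map_one]

lemma sigmaC_eq_prod (q : ℕ) (α : ℕ → ℝ) (hq : 1 ≤ q) :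
    sigmaC q α = ((rho q α).roots.map fun a => 1 - Polynomial.C a * Polynomial.X).prod := by
  apply Polynomial.funext
  intro z
  rw [Polynomial.eval_multiset_prod, Multiset.map_map]
  have heval : ∀ a : ℂ, (Polynomial.eval z ∘ fun a => 1 - Polynomial.C a * Polynomial.X) a
      = 1 - a * z := by intro a; simp
  rw [Multiset.map_congr rfl (fun a _ => heval a)]
  by_cases hz : z = 0
  · subst hz
    have : ∀ a ∈ (rho q α).roots, (fun a : ℂ => 1 - a * 0) a = 1 := by intro a _; simp
    rw [Multiset.map_congr rfl this, Multiset.map_const', Multiset.prod_replicate, one_pow]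
    simp only [sigmaC, Polynomial.eval_sub, Polynomial.eval_one, Polynomial.eval_finset_sum]
    rw [Finset.sum_eq_zero, sub_zero]
    intro i hi
    have hi1 : 1 ≤ i := (Finset.mem_Icc.mp hi).1
    simp [zero_pow (by omega : i ≠ 0)]
  · -- z ≠ 0
    have hfac : ∀ a ∈ (rho q α).roots, (fun a : ℂ => 1 - a * z) a = z * (z⁻¹ - a) := by
      intro a _
      field_simp
    rw [Multiset.map_congr rfl hfac]
    have : ((rho q α).roots.map fun a => z * (z⁻¹ - a)).prod
        = ((rho q α).roots.map fun _ => z).prod * ((rho q α).roots.map fun a => z⁻¹ - a).prod := by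
      rw [← Multiset.prod_map_mul]
    rw [this, Multiset.map_const', Multiset.prod_replicate, card_roots_rho q α hq]
    have hev : ((rho q α).roots.map fun a => z⁻¹ - a).prod = Polynomial.eval z⁻¹ (rho q α) := by
      conv_rhs => rw [rho_eq_prod q α hq]
      rw [Polynomial.eval_multiset_prod, Multiset.map_map]
      refine congrArg _ (Multiset.map_congr rfl fun a _ => ?_)
      simp
    rw [hev]
    simp only [rho, Polynomial.eval_sub, Polynomial.eval_pow, Polynomial.eval_X,
      Polynomial.eval_finset_sum, Polynomial.eval_mul, Polynomial.eval_C,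
      sigmaC, Polynomial.eval_one]
    rw [mul_sub]
    have hzq : z ^ q * z⁻¹ ^ q = 1 := by
      rw [← mul_pow, mul_inv_cancel₀ hz, one_pow]
    rw [hzq]
    congr 1
    rw [Finset.mul_sum]
    refine Finset.sum_nbij' (fun j => q - j) (fun i => q - i) ?_ ?_ ?_ ?_ ?_
    · intro a ha
      simp only [Finset.mem_Icc] at ha
      simp only [Finset.mem_range]
      omega
    · intro a ha
      simp only [Finset.mem_range] at ha
      simp only [Finset.mem_Icc]
      omega
    · intro a ha
      simp only [Finset.mem_Icc] at ha
      show q - (q - a) = a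
      omega
    · intro a ha
      simp only [Finset.mem_range] at ha
      show q - (q - a) = a
      omega
    · intro a ha
      simp only [Finset.mem_Icc] at ha
      have h1 : z ^ q * z⁻¹ ^ (q - a) = z ^ a := by
        have h2 : z ^ q = z ^ a * z ^ (q - a) := by
          rw [← pow_add, Nat.add_sub_cancel' ha.2]
        rw [h2, mul_assoc, ← mul_pow, mul_inv_cancel₀ hz, one_pow, mul_one]
      rw [← h1]
      ring

lemma coe_map_ps (q : ℕ) (α : ℕ → ℝ) :
    (((sigmaPoly q α).map (algebraMap ℝ ℂ) : Polynomial ℂ) : PowerSeries ℂ)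
      = PowerSeries.map (algebraMap ℝ ℂ) (sigmaPoly q α : PowerSeries ℝ) := by
  ext n
  rw [Polynomial.coeff_coe, PowerSeries.coeff_map, Polynomial.coeff_coe, Polynomial.coeff_map]

lemma sigmaC_mul_G (q : ℕ) (α : ℕ → ℝ) (hq : 1 ≤ q) :
    ((sigmaC q α : Polynomial ℂ) : PowerSeries ℂ) * ((rho q α).roots.map geom).prod = 1 := by
  rw [sigmaC_eq_prod q α hq]
  have h1 : (((((rho q α).roots.map fun a => 1 - Polynomial.C a * Polynomial.X).prod
      : Polynomial ℂ)) : PowerSeries ℂ)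
      = (((rho q α).roots.map fun a => (1 - PowerSeries.C a * PowerSeries.X)).prod) := by
    rw [← Polynomial.coeToPowerSeries.ringHom_apply, map_multiset_prod, Multiset.map_map]
    refine congrArg _ (Multiset.map_congr rfl fun a _ => ?_)
    simp only [Function.comp_apply, map_sub, map_one, map_mul,
      Polynomial.coeToPowerSeries.ringHom_apply, Polynomial.coe_C, Polynomial.coe_X]
  rw [h1, ← Multiset.prod_map_mul]
  have h2 : ((rho q α).roots.map
      fun a => (1 - PowerSeries.C a * PowerSeries.X) * geom a)
      = (rho q α).roots.map fun _ => (1 : PowerSeries ℂ) :=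
    Multiset.map_congr rfl fun a _ => one_sub_mul_geom a
  rw [h2, Multiset.map_const', Multiset.prod_replicate, one_pow]

lemma G_eq_map_inv (q : ℕ) (α : ℕ → ℝ) (hq : 1 ≤ q) :
    PowerSeries.map (algebraMap ℝ ℂ) ((sigmaPoly q α : PowerSeries ℝ))⁻¹
      = ((rho q α).roots.map geom).prod := by
  have h1 : ((sigmaC q α : Polynomial ℂ) : PowerSeries ℂ)
      * PowerSeries.map (algebraMap ℝ ℂ) ((sigmaPoly q α : PowerSeries ℝ))⁻¹ = 1 := by
    rw [← sigmaC_eq_map, coe_map_ps, ← map_mul, sigma_mul_inv, map_one]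
  have h2 := sigmaC_mul_G q α hq
  have hne : ((sigmaC q α : Polynomial ℂ) : PowerSeries ℂ) ≠ 0 := by
    intro h0
    rw [h0, zero_mul] at h2
    exact zero_ne_one h2
  exact mul_left_cancel₀ hne (h1.trans h2.symm)

lemma gam_bounded (q : ℕ) (α : ℕ → ℝ) (hq : 1 ≤ q)
    (hroot : ∀ z : ℂ, (rho q α).IsRoot z →
      ‖z‖ ≤ 1 ∧ (‖z‖ = 1 → (rho q α).rootMultiplicity z = 1)) :
    ∃ K : ℝ, 0 < K ∧ ∀ n, |gam q α n| ≤ K := by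
  classical
  set R := (rho q α).roots with hR
  have hrne : rho q α ≠ 0 := (monic_rho q α hq).ne_zero
  set U := R.filter (fun z => ‖z‖ = 1) with hUdef
  set S := R.filter (fun z => ¬ ‖z‖ = 1) with hSdef
  have hUS : U + S = R := Multiset.filter_add_not _ R
  have hUnodup : U.Nodup := by
    rw [Multiset.nodup_iff_count_le_one]
    intro a
    rw [hUdef, Multiset.count_filter]
    by_cases ha : ‖a‖ = 1
    · simp only [ha, if_pos rfl]
      by_cases haR : a ∈ R
      · have hisr : (rho q α).IsRoot a := (Polynomial.mem_roots'.mp haR).2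
        rw [hR, Polynomial.count_roots]
        exact le_of_eq ((hroot a hisr).2 ha)
      · rw [Multiset.count_eq_zero_of_notMem haR]
        simp
    · simp [ha]
  have hSlt : ∀ z ∈ S, ‖z‖ < 1 := by
    intro z hz
    rw [hSdef, Multiset.mem_filter] at hz
    exact lt_of_le_of_ne (hroot z (Polynomial.mem_roots'.mp hz.1).2).1 hz.2
  have hsgen : ∀ g ∈ insert (1 : PowerSeries ℂ) (geom '' {z | z ∈ U}),
      ∀ n, ‖PowerSeries.coeff n g‖ ≤ 1 := by
    rintro g (rfl | ⟨m, hm, rfl⟩) n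
    · rw [PowerSeries.coeff_one]
      split <;> simp
    · rw [coeff_geom, norm_pow]
      have hm' : m ∈ U := hm
      rw [hUdef, Multiset.mem_filter] at hm'
      rw [hm'.2, one_pow]
  obtain ⟨K1, _, hK1⟩ := bounded_of_mem_span hsgen (prod_geom_mem_span U hUnodup)
  obtain ⟨K2, hK2⟩ := small_prod_mul_bounded S hSlt ((U.map geom).prod) K1 hK1
  have hGprod : (R.map geom).prod = (S.map geom).prod * (U.map geom).prod := by
    rw [← hUS, Multiset.map_add, Multiset.prod_add, mul_comm]
  refine ⟨max K2 1, lt_of_lt_of_le zero_lt_one (le_max_right _ _), fun n => ?_⟩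
  have habs : |gam q α n|
      = ‖PowerSeries.coeff n ((R.map geom).prod)‖ := by
    rw [← G_eq_map_inv q α hq, PowerSeries.coeff_map]
    rw [gam]
    exact ((Complex.norm_real _).trans (Real.norm_eq_abs _)).symm
  rw [habs, hGprod]
  exact le_trans (hK2 n) (le_max_left _ _)

lemma gronwall (u : ℕ → ℝ) (a b : ℝ) (hb : 0 < b) (ha : 0 ≤ a) (N : ℕ)
    (h : ∀ n ≤ N, u n ≤ a + b * ∑ i ∈ Finset.range n, u i) :
    ∀ n ≤ N, u n ≤ a * (1 + b) ^ n := by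
  intro n
  induction n using Nat.strong_induction_on with
  | _ n ih =>
    intro hn
    have h1 : u n ≤ a + b * ∑ i ∈ Finset.range n, u i := h n hn
    have h2 : ∑ i ∈ Finset.range n, u i ≤ ∑ i ∈ Finset.range n, a * (1 + b) ^ i := by
      refine Finset.sum_le_sum fun i hi => ?_
      exact ih i (Finset.mem_range.mp hi) (le_trans (le_of_lt (Finset.mem_range.mp hi)) hn)
    have h3 : ∑ i ∈ Finset.range n, a * (1 + b) ^ i
        = a * (((1 + b) ^ n - 1) / b) := by
      rw [← Finset.mul_sum]
      congr 1
      rw [geom_sum_eq (by intro hc; nlinarith : (1:ℝ) + b ≠ 1)]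
      congr 1
      ring
    have hbne : b ≠ 0 := ne_of_gt hb
    calc u n ≤ a + b * ∑ i ∈ Finset.range n, u i := h1
      _ ≤ a + b * (a * (((1 + b) ^ n - 1) / b)) := by
          have := le_trans h2 (le_of_eq h3)
          nlinarith [this]
      _ = a * (1 + b) ^ n := by field_simp; ring

lemma rep_formula {E : Type*} [AddCommGroup E] [Module ℝ E]
    (q : ℕ) (hq : 1 ≤ q) (α : ℕ → ℝ) (e r : ℕ → E)
    (h0 : ∀ n, n < q → e n = 0)
    (hrec : ∀ n, q ≤ n → e n = (∑ i ∈ Finset.Icc 1 q, α (q - i) • e (n - i)) + r n) :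
    ∀ n, e n = ∑ k ∈ Finset.Icc q n, gam q α (n - k) • r k := by
  intro n
  induction n using Nat.strong_induction_on with
  | _ n ih =>
    by_cases hn : n < q
    · rw [h0 n hn, Finset.Icc_eq_empty (by omega), Finset.sum_empty]
    · push_neg at hn
      rw [hrec n hn]
      have hstep : ∀ i ∈ Finset.Icc 1 q,
          α (q - i) • e (n - i)
            = ∑ k ∈ Finset.Icc q n,
                (if i ≤ n - k then α (q - i) * gam q α (n - k - i) else 0) • r k := by
        intro i hi
        obtain ⟨hi1, hi2⟩ := Finset.mem_Icc.mp hi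
        have hin : i ≤ n := le_trans hi2 hn
        rw [ih (n - i) (by omega)]
        rw [Finset.smul_sum]
        have hsub : Finset.Icc q (n - i) = (Finset.Icc q n).filter (fun k => i ≤ n - k) := by
          ext k
          simp only [Finset.mem_Icc, Finset.mem_filter]
          omega
        rw [hsub, Finset.sum_filter]
        refine Finset.sum_congr rfl fun k hk => ?_
        obtain ⟨hk1, hk2⟩ := Finset.mem_Icc.mp hk
        by_cases hik : i ≤ n - k
        · rw [if_pos hik, if_pos hik, smul_smul, Nat.sub_right_comm]
        · rw [if_neg hik, if_neg hik]
          exact (zero_smul ℝ (r k)).symm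
      rw [Finset.sum_congr rfl hstep, Finset.sum_comm]
      have hinner : ∀ k ∈ Finset.Icc q n,
          ∑ i ∈ Finset.Icc 1 q,
              (if i ≤ n - k then α (q - i) * gam q α (n - k - i) else 0) • r k
            = (gam q α (n - k)) • r k - (if n - k = 0 then (1:ℝ) else 0) • r k := by
        intro k hk
        rw [← Finset.sum_smul, ← sub_smul]
        congr 1
        have := gam_rec q α (n - k)
        have hgoal : ∑ i ∈ Finset.Icc 1 q,
            (if i ≤ n - k then α (q - i) * gam q α (n - k - i) else 0)
            = gam q α (n - k) - (if n - k = 0 then (1:ℝ) else 0) := by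
          rw [this]
          ring
        exact hgoal
      rw [Finset.sum_congr rfl hinner, Finset.sum_sub_distrib]
      have hdelta : ∑ k ∈ Finset.Icc q n, (if n - k = 0 then (1:ℝ) else 0) • r k = r n := by
        have hcong : ∀ k ∈ Finset.Icc q n,
            (if n - k = 0 then (1:ℝ) else 0) • r k = (if n = k then (1:ℝ) else 0) • r k := by
          intro k hk
          obtain ⟨hk1, hk2⟩ := Finset.mem_Icc.mp hk
          congr 1
          by_cases hkn : k = n
          · subst hkn; simp
          · rw [if_neg (by omega), if_neg (by omega)]
        rw [Finset.sum_congr rfl hcong]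
        have : ∀ k ∈ Finset.Icc q n, (if n = k then (1:ℝ) else 0) • r k
            = if n = k then r k else 0 := by
          intro k _
          split <;> simp
        rw [Finset.sum_congr rfl this, Finset.sum_ite_eq (Finset.Icc q n) n r,
          if_pos (Finset.mem_Icc.mpr ⟨hn, le_refl n⟩)]
      rw [hdelta]
      abel

lemma shift_sum_le (u : ℕ → ℝ) (hu : ∀ j, 0 ≤ u j) (i q n : ℕ) (hi : i ≤ q) :
    ∑ k ∈ Finset.Icc q n, u (k - i) ≤ ∑ j ∈ Finset.range (n + 1), u j := by
  have hinj : ∀ a ∈ Finset.Icc q n, ∀ b ∈ Finset.Icc q n, a - i = b - i → a = b := by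
    intro a ha b hb hab
    obtain ⟨ha1, _⟩ := Finset.mem_Icc.mp ha
    obtain ⟨hb1, _⟩ := Finset.mem_Icc.mp hb
    omega
  rw [← Finset.sum_image hinj]
  refine Finset.sum_le_sum_of_subset_of_nonneg ?_ (fun j _ _ => hu j)
  intro j hj
  obtain ⟨k, hk, rfl⟩ := Finset.mem_image.mp hj
  obtain ⟨_, hk2⟩ := Finset.mem_Icc.mp hk
  rw [Finset.mem_range]
  omega

end

end Stmt5Aux
set_option maxHeartbeats 2000000 in
open Finset in
/-- Convergence for LMM with memory (Theorem 4.1): root condition plus consistency of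
order `p` implies global error of order `p`. -/
theorem stmt_5 (d q : ℕ) (hd : 1 ≤ d) (hq : 1 ≤ q)
    (α : ℕ → ℝ) (β : ℕ → ℝ) (L M C₀ : ℝ) (hL : 0 < L) (hM : 0 < M) (hC₀ : 0 < C₀)
    (p : ℕ) (hp : 1 ≤ p)
    -- root condition for p(s) = s^q - ∑_{i=1}^q α_{q-i} s^{q-i} = s^q - ∑_{j=0}^{q-1} α_j s^j
    (hroot : ∀ z : ℂ,
      (Polynomial.X ^ q
        - ∑ j ∈ Finset.range q, Polynomial.C ((α j : ℂ)) * Polynomial.X ^ j).IsRoot z →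
      ‖z‖ ≤ 1 ∧ (‖z‖ = 1 →
        (Polynomial.X ^ q
          - ∑ j ∈ Finset.range q, Polynomial.C ((α j : ℂ)) * Polynomial.X ^ j).rootMultiplicity z
          = 1))
    (f : (Fin d → ℝ) → ℝ → (Fin d → ℝ)) (g : (Fin d → ℝ) → ℝ → ℝ → (Fin d → ℝ))
    -- uniform Lipschitz condition in the first argument (sup-norm on ℝ^d)
    (hf : ∀ (u u' : Fin d → ℝ) (t : ℝ), ‖f u t - f u' t‖ ≤ L * ‖u - u'‖)
    (hg : ∀ (u u' : Fin d → ℝ) (s t : ℝ), ‖g u s t - g u' s t‖ ≤ L * ‖u - u'‖)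
    (w : ℝ → ℕ → ℕ → ℝ)
    (hw : ∀ h : ℝ, 0 < h → ∀ n i : ℕ, i ≤ n → |w h n i| ≤ M * h)
    (x : ℝ → (Fin d → ℝ))
    -- local truncation errors of order p
    (hτ : ∀ h : ℝ, 0 < h → ∀ n : ℕ, q ≤ n →
      ‖x ((n : ℝ) * h)
          - (∑ i ∈ Finset.Icc 1 q, α (q - i) • x (((n - i : ℕ) : ℝ) * h))
          - h • (∑ i ∈ Finset.range (q + 1),
              β (q - i) • f (x (((n - i : ℕ) : ℝ) * h)) (((n - i : ℕ) : ℝ) * h))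
          - h • (∑ i ∈ Finset.range (n + 1),
              w h n i • g (x ((i : ℝ) * h)) ((i : ℝ) * h) ((n : ℝ) * h))‖
        ≤ C₀ * h ^ (p + 1)) :
    ∀ T > 0, ∃ h₀ > 0, ∃ C > 0, ∀ h : ℝ, 0 < h → h ≤ h₀ →
      ∀ xn : ℕ → (Fin d → ℝ),
        -- exact starting values
        (∀ i : ℕ, i < q → xn i = x ((i : ℝ) * h)) →
        -- the numerical scheme
        (∀ n : ℕ, q ≤ n →
          xn n = (∑ i ∈ Finset.Icc 1 q, α (q - i) • xn (n - i))
            + h • (∑ i ∈ Finset.range (q + 1),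
                β (q - i) • f (xn (n - i)) (((n - i : ℕ) : ℝ) * h))
            + h • (∑ i ∈ Finset.range (n + 1),
                w h n i • g (xn i) ((i : ℝ) * h) ((n : ℝ) * h))) →
        ∀ n : ℕ, (n : ℝ) * h ≤ T → ‖x ((n : ℝ) * h) - xn n‖ ≤ C * h ^ p := by
  intro T hT
  obtain ⟨K, hK, hKb⟩ := Stmt5Aux.gam_bounded q α hq (by unfold Stmt5Aux.rho; exact hroot)
  set B : ℝ := ∑ i ∈ Finset.range (q + 1), |β (q - i)| with hB
  have hBnn : 0 ≤ B := Finset.sum_nonneg fun i _ => abs_nonneg _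
  set C₂ : ℝ := K * L * (B + M * (T + 1)) with hC₂def
  have hC₂pos : 0 < C₂ := by
    have h1 : 0 < B + M * (T + 1) := by nlinarith
    exact mul_pos (mul_pos hK hL) h1
  set A : ℝ := K * C₀ * (T + 1) with hAdef
  have hApos : 0 < A := by
    have h1 : (0:ℝ) < T + 1 := by linarith
    exact mul_pos (mul_pos hK hC₀) h1
  refine ⟨min 1 (1 / (2 * C₂)), lt_min one_pos (by positivity),
    2 * A * Real.exp (2 * C₂ * T), by positivity, ?_⟩
  intro h hh hh0 xn hstart hscheme
  have hh1 : h ≤ 1 := le_trans hh0 (min_le_left _ _)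
  have hhC₂ : h * C₂ ≤ 1 / 2 := by
    have h2 : h ≤ 1 / (2 * C₂) := le_trans hh0 (min_le_right _ _)
    rw [le_div_iff₀ (by positivity)] at h2
    linarith
  set e : ℕ → (Fin d → ℝ) := fun m => x ((m : ℝ) * h) - xn m with he
  set r : ℕ → (Fin d → ℝ) := fun m =>
    (x ((m : ℝ) * h) - (∑ i ∈ Finset.Icc 1 q, α (q - i) • x (((m - i : ℕ) : ℝ) * h))
      - h • (∑ i ∈ Finset.range (q + 1),
          β (q - i) • f (x (((m - i : ℕ) : ℝ) * h)) (((m - i : ℕ) : ℝ) * h))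
      - h • (∑ i ∈ Finset.range (m + 1),
          w h m i • g (x ((i : ℝ) * h)) ((i : ℝ) * h) ((m : ℝ) * h)))
    + h • (∑ i ∈ Finset.range (q + 1),
        β (q - i) • (f (x (((m - i : ℕ) : ℝ) * h)) (((m - i : ℕ) : ℝ) * h)
          - f (xn (m - i)) (((m - i : ℕ) : ℝ) * h)))
    + h • (∑ i ∈ Finset.range (m + 1),
        w h m i • (g (x ((i : ℝ) * h)) ((i : ℝ) * h) ((m : ℝ) * h)
          - g (xn i) ((i : ℝ) * h) ((m : ℝ) * h))) with hr
  have h0 : ∀ m, m < q → e m = 0 := by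
    intro m hm
    simp only [he]
    rw [hstart m hm, sub_self]
  have hF4 : ∀ m, q ≤ m → e m = (∑ i ∈ Finset.Icc 1 q, α (q - i) • e (m - i)) + r m := by
    intro m hm
    simp only [he, hr]
    rw [hscheme m hm]
    simp only [smul_sub, Finset.sum_sub_distrib]
    abel
  have hrep := Stmt5Aux.rep_formula q hq α e r h0 hF4
  set u : ℕ → ℝ := fun m => ‖e m‖ with hu
  have hunn : ∀ m, 0 ≤ u m := fun m => norm_nonneg _
  have hrbound : ∀ m, q ≤ m → ‖r m‖ ≤ C₀ * h ^ (p + 1)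
      + h * L * ∑ i ∈ Finset.range (q + 1), |β (q - i)| * u (m - i)
      + M * h ^ 2 * L * ∑ i ∈ Finset.range (m + 1), u i := by
    intro m hm
    simp only [hr]
    refine le_trans (norm_add₃_le) (add_le_add_three (hτ h hh m hm) ?_ ?_)
    · rw [norm_smul, Real.norm_eq_abs, abs_of_pos hh]
      have hβ : ‖∑ i ∈ Finset.range (q + 1),
          β (q - i) • (f (x (((m - i : ℕ) : ℝ) * h)) (((m - i : ℕ) : ℝ) * h)
            - f (xn (m - i)) (((m - i : ℕ) : ℝ) * h))‖
          ≤ ∑ i ∈ Finset.range (q + 1), |β (q - i)| * (L * u (m - i)) := by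
        refine le_trans (norm_sum_le _ _) (Finset.sum_le_sum fun i _ => ?_)
        rw [norm_smul, Real.norm_eq_abs]
        exact mul_le_mul_of_nonneg_left (hf _ _ _) (abs_nonneg _)
      refine le_trans (mul_le_mul_of_nonneg_left hβ hh.le) (le_of_eq ?_)
      rw [Finset.mul_sum, Finset.mul_sum]
      exact Finset.sum_congr rfl fun i _ => by ring
    · rw [norm_smul, Real.norm_eq_abs, abs_of_pos hh]
      have hγ : ‖∑ i ∈ Finset.range (m + 1),
          w h m i • (g (x ((i : ℝ) * h)) ((i : ℝ) * h) ((m : ℝ) * h)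
            - g (xn i) ((i : ℝ) * h) ((m : ℝ) * h))‖
          ≤ ∑ i ∈ Finset.range (m + 1), M * h * (L * u i) := by
        refine le_trans (norm_sum_le _ _) (Finset.sum_le_sum fun i hi => ?_)
        rw [norm_smul, Real.norm_eq_abs]
        have hi' : i ≤ m := by
          have := Finset.mem_range.mp hi
          omega
        exact mul_le_mul (hw h hh m i hi') (hg _ _ _ _) (norm_nonneg _)
          (by positivity)
      refine le_trans (mul_le_mul_of_nonneg_left hγ hh.le) (le_of_eq ?_)
      rw [Finset.mul_sum, Finset.mul_sum]
      exact Finset.sum_congr rfl fun i _ => by ring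
  have hcore : ∀ n : ℕ, (n : ℝ) * h ≤ T →
      u n ≤ A * h ^ p + h * C₂ * ∑ i ∈ Finset.range (n + 1), u i := by
    intro n hnT
    have hSnn : (0:ℝ) ≤ ∑ i ∈ Finset.range (n + 1), u i :=
      Finset.sum_nonneg fun i _ => hunn i
    by_cases hnq : n < q
    · have hzero : u n = 0 := by
        simp only [hu]
        rw [h0 n hnq, norm_zero]
      rw [hzero]
      have : (0:ℝ) ≤ A * h ^ p := by positivity
      nlinarith [mul_nonneg (mul_nonneg hh.le hC₂pos.le) hSnn]
    · push_neg at hnq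
      set S : ℝ := ∑ i ∈ Finset.range (n + 1), u i with hS
      have hSnn' : 0 ≤ S := hSnn
      have h5 : u n ≤ K * ∑ k ∈ Finset.Icc q n, ‖r k‖ := by
        simp only [hu]
        rw [hrep n]
        refine le_trans (norm_sum_le _ _) ?_
        rw [Finset.mul_sum]
        refine Finset.sum_le_sum fun k _ => ?_
        rw [norm_smul, Real.norm_eq_abs]
        exact mul_le_mul_of_nonneg_right (hKb _) (norm_nonneg _)
      have h6 : ∑ k ∈ Finset.Icc q n, ‖r k‖
          ≤ ((n:ℝ) + 1) * (C₀ * h ^ (p + 1)) + h * L * (B * S)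
            + ((n:ℝ) + 1) * (M * h ^ 2 * L * S) := by
        have h7 : ∑ k ∈ Finset.Icc q n, ‖r k‖
            ≤ ∑ k ∈ Finset.Icc q n, (C₀ * h ^ (p + 1)
              + h * L * ∑ i ∈ Finset.range (q + 1), |β (q - i)| * u (k - i)
              + M * h ^ 2 * L * ∑ i ∈ Finset.range (k + 1), u i) :=
          Finset.sum_le_sum fun k hk => hrbound k (Finset.mem_Icc.mp hk).1
        refine le_trans h7 ?_
        rw [Finset.sum_add_distrib, Finset.sum_add_distrib]
        have hcard : ((Finset.Icc q n).card : ℝ) ≤ (n:ℝ) + 1 := by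
          rw [Nat.card_Icc]
          exact_mod_cast Nat.cast_le.mpr (by omega : n + 1 - q ≤ n + 1)
        refine add_le_add_three ?_ ?_ ?_
        · rw [Finset.sum_const, nsmul_eq_mul]
          exact mul_le_mul_of_nonneg_right hcard (by positivity)
        · rw [← Finset.mul_sum]
          refine mul_le_mul_of_nonneg_left ?_ (by positivity)
          rw [Finset.sum_comm]
          have hin : ∀ i ∈ Finset.range (q + 1),
              ∑ k ∈ Finset.Icc q n, |β (q - i)| * u (k - i) ≤ |β (q - i)| * S := by
            intro i hi
            rw [← Finset.mul_sum]
            refine mul_le_mul_of_nonneg_left ?_ (abs_nonneg _)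
            exact Stmt5Aux.shift_sum_le u hunn i q n
              (by have := Finset.mem_range.mp hi; omega)
          refine le_trans (Finset.sum_le_sum hin) (le_of_eq ?_)
          rw [← Finset.sum_mul]
        · have hin : ∀ k ∈ Finset.Icc q n,
              M * h ^ 2 * L * ∑ i ∈ Finset.range (k + 1), u i ≤ M * h ^ 2 * L * S := by
            intro k hk
            refine mul_le_mul_of_nonneg_left ?_ (by positivity)
            refine Finset.sum_le_sum_of_subset_of_nonneg ?_ (fun j _ _ => hunn j)
            exact Finset.range_subset_range.mpr (by have := (Finset.mem_Icc.mp hk).2; omega)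
          refine le_trans (Finset.sum_le_sum hin) ?_
          rw [Finset.sum_const, nsmul_eq_mul]
          rw [mul_comm (((Finset.Icc q n).card : ℝ))]
          rw [mul_comm (((n:ℝ) + 1))]
          exact mul_le_mul_of_nonneg_left hcard (by positivity)
      have hnh : ((n:ℝ) + 1) * h ≤ T + 1 := by nlinarith
      have hps : h ^ (p + 1) = h ^ p * h := pow_succ h p
      calc u n ≤ K * (((n:ℝ)+1)*(C₀*h^(p+1)) + h*L*(B*S) + ((n:ℝ)+1)*(M*h^2*L*S)) :=
            le_trans h5 (mul_le_mul_of_nonneg_left h6 hK.le)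
        _ ≤ A * h ^ p + h * C₂ * S := by
            rw [hAdef, hC₂def, hps]
            nlinarith [mul_nonneg (sub_nonneg.mpr hnh) (by positivity : (0:ℝ) ≤ K*C₀*h^p),
              mul_nonneg (mul_nonneg (sub_nonneg.mpr hnh) hSnn')
                (by positivity : (0:ℝ) ≤ K*M*L*h)]
  intro n hnT
  have hgr : ∀ m, m ≤ n →
      u m ≤ 2*(A*h^p) + (2*(h*C₂)) * ∑ i ∈ Finset.range m, u i := by
    intro m hm
    have hmT : (m:ℝ) * h ≤ T :=
      le_trans (mul_le_mul_of_nonneg_right (Nat.cast_le.mpr hm) hh.le) hnT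
    have hcm := hcore m hmT
    rw [Finset.sum_range_succ] at hcm
    have hsnn : (0:ℝ) ≤ ∑ i ∈ Finset.range m, u i := Finset.sum_nonneg fun i _ => hunn i
    have hpr : 0 ≤ (1 - 2*(h*C₂)) * u m := mul_nonneg (by linarith) (hunn m)
    nlinarith [hcm, hpr, mul_nonneg (mul_nonneg hh.le hC₂pos.le) hsnn]
  have hgron := Stmt5Aux.gronwall u (2*(A*h^p)) (2*(h*C₂)) (by positivity)
    (by positivity) n hgr n le_rfl
  have hexp1 : (1 + 2*(h*C₂)) ≤ Real.exp (2*(h*C₂)) := by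
    have := Real.add_one_le_exp (2*(h*C₂))
    linarith
  have hexp2 : (1 + 2*(h*C₂))^n ≤ Real.exp (2*C₂*T) := by
    refine le_trans (pow_le_pow_left₀ (by positivity) hexp1 n) ?_
    rw [← Real.exp_nat_mul]
    refine Real.exp_le_exp.mpr ?_
    have hrg : (n:ℝ) * (2*(h*C₂)) = 2*C₂*((n:ℝ)*h) := by ring
    rw [hrg]
    exact mul_le_mul_of_nonneg_left hnT (by positivity)
  have hfin : u n ≤ 2*(A*h^p) * Real.exp (2*C₂*T) :=
    le_trans hgron (mul_le_mul_of_nonneg_left hexp2 (by positivity))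
  have hrfl : ‖x ((n : ℝ) * h) - xn n‖ = u n := rfl
  rw [hrfl]
  refine le_trans hfin (le_of_eq ?_)
  ring
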